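/- For every point p ∈ ℝ³ not lying in the union of the three rays {(0, t, t) : t ≥ 0} ∪ {(0, t, 0) : t ≤ 0} ∪ {(0, 0, t) : t ≤ 0}, the fiber f⁻¹({p}) of the Harvey–Lawson map is homeomorphic to S¹ × S¹ × ℝ (the product of a 2-torus with a line), where S¹ denotes the unit circle in ℂ. -/

import Mathlib

open Complex

/-- The Harvey–Lawson map `f : ℂ³ → ℝ³`. -/
noncomputable def HarveyLawson (z : Fin 3 → ℂ) : Fin 3 → ℝ :=
  ![(z 0 * z 1 * z 2).im,
    ‖z 0‖ ^ 2 - ‖z 1‖ ^ 2,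
    ‖z 0‖ ^ 2 - ‖z 2‖ ^ 2]

/-- The discriminant locus of the Harvey–Lawson fibration: three rays in the plane
`{x₁ = 0} ⊂ ℝ³`. -/
def HLDiscriminant : Set (Fin 3 → ℝ) :=
  {x : Fin 3 → ℝ | ∃ t : ℝ, 0 ≤ t ∧ x = ![0, t, t]} ∪
  {x : Fin 3 → ℝ | ∃ t : ℝ, t ≤ 0 ∧ x = ![0, t, 0]} ∪
  {x : Fin 3 → ℝ | ∃ t : ℝ, t ≤ 0 ∧ x = ![0, 0, t]}

def HLSet (β γ q : ℝ) : Set (ℂ × ℂ × ℂ) :=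
  {w | ‖w.1‖ ^ 2 - ‖w.2.1‖ ^ 2 = β ∧
       ‖w.1‖ ^ 2 - ‖w.2.2‖ ^ 2 = γ ∧
       (w.1 * w.2.1 * w.2.2).im = q}

lemma abs_sphere (u : Metric.sphere (0:ℂ) 1) : ‖(u : ℂ)‖ = 1 := by
  have := mem_sphere_zero_iff_norm.1 u.2
  exact this

lemma sphere_ne_zero (u : Metric.sphere (0:ℂ) 1) : (u : ℂ) ≠ 0 := by
  intro h
  have := abs_sphere u
  rw [h] at this
  simp at this

lemma hlset_homeo (β γ q : ℝ)
    (hkey : ∀ s : ℝ, 0 ≤ s → β ≤ s → γ ≤ s →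
      q ^ 2 ≤ s * (s - β) * (s - γ) → 0 < s ∧ β < s) :
    Nonempty ((HLSet β γ q) ≃ₜ
      (Metric.sphere (0:ℂ) 1 × Metric.sphere (0:ℂ) 1 × ℝ)) := by
  set m : ℝ := max (max 0 β) γ with hm
  have hm0 : (0:ℝ) ≤ m := le_max_of_le_left (le_max_left _ _)
  have hmβ : β ≤ m := le_max_of_le_left (le_max_right _ _)
  have hmγ : γ ≤ m := le_max_right _ _
  set g : ℝ → ℝ := fun s => s * (s - β) * (s - γ) with hgdef
  have hgm : g m = 0 := by
    have hcase : m = 0 ∨ m = β ∨ m = γ := by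
      rcases max_choice (max 0 β) γ with h | h
      · rcases max_choice 0 β with h2 | h2
        · exact Or.inl (by rw [hm, h, h2])
        · exact Or.inr (Or.inl (by rw [hm, h, h2]))
      · exact Or.inr (Or.inr (by rw [hm, h]))
    rcases hcase with h | h | h <;> simp [hgdef, h]
  have hgmono : ∀ s s' : ℝ, m ≤ s → s < s' → g s < g s' := by
    intro s s' hs hss
    have h0 : 0 ≤ s := le_trans hm0 hs
    have h1 : β ≤ s := le_trans hmβ hs
    have h2 : γ ≤ s := le_trans hmγ hs
    have step1 : s * (s - β) * (s - γ) ≤ s * (s - β) * (s' - γ) :=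
      mul_le_mul_of_nonneg_left (by linarith) (mul_nonneg h0 (by linarith))
    have step2 : s * (s - β) * (s' - γ) ≤ s * (s' - β) * (s' - γ) := by
      have : s * (s - β) ≤ s * (s' - β) := mul_le_mul_of_nonneg_left (by linarith) h0
      exact mul_le_mul_of_nonneg_right this (by linarith)
    have step3 : s * (s' - β) * (s' - γ) < s' * (s' - β) * (s' - γ) := by
      have hp : 0 < (s' - β) * (s' - γ) := mul_pos (by linarith) (by linarith)
      calc s * (s' - β) * (s' - γ) = s * ((s' - β) * (s' - γ)) := by ring
        _ < s' * ((s' - β) * (s' - γ)) := mul_lt_mul_of_pos_right hss hp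
        _ = s' * (s' - β) * (s' - γ) := by ring
    simp only [hgdef]
    linarith
  set G : ℝ → ℝ := fun s => g (max s m) + min (s - m) 0 with hGdef
  have hGle : ∀ s, s ≤ m → G s = s - m := by
    intro s hs
    simp [hGdef, max_eq_right hs, hgm, min_eq_left (by linarith : s - m ≤ 0)]
  have hGge : ∀ s, m ≤ s → G s = g s := by
    intro s hs
    simp [hGdef, max_eq_left hs, min_eq_right (by linarith : (0:ℝ) ≤ s - m)]
  have hGm : G m = 0 := by rw [hGge m le_rfl, hgm]
  have hGmono : StrictMono G := by
    intro s s' hss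
    rcases le_or_gt s' m with h | h
    · rw [hGle s (le_trans hss.le h), hGle s' h]; linarith
    · rcases le_or_gt m s with h2 | h2
      · rw [hGge s h2, hGge s' h.le]; exact hgmono s s' h2 hss
      · rw [hGle s h2.le, hGge s' h.le]
        have := hgmono m s' le_rfl h
        rw [hgm] at this
        linarith
  have hGcont : Continuous G := by
    have c1 : Continuous fun s : ℝ => max s m := continuous_id.max continuous_const
    have : Continuous fun s : ℝ =>
        (max s m) * (max s m - β) * (max s m - γ) + min (s - m) 0 :=
      ((c1.mul (c1.sub continuous_const)).mul (c1.sub continuous_const)).add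
        ((continuous_id.sub continuous_const).min continuous_const)
    exact this
  have hGtop : Filter.Tendsto G Filter.atTop Filter.atTop := by
    apply Filter.tendsto_atTop_mono' Filter.atTop (f₁ := fun s => s - m)
    · filter_upwards [Filter.eventually_ge_atTop (m + 1)] with s hs
      rw [hGge s (by linarith)]
      show s - m ≤ s * (s - β) * (s - γ)
      nlinarith [mul_nonneg (by linarith : (0:ℝ) ≤ s - β) (by linarith : (0:ℝ) ≤ s - γ),
        mul_le_mul (by linarith : (1:ℝ) ≤ s - β) (by linarith : (1:ℝ) ≤ s - γ)
          (by linarith) (by linarith)]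
    · exact Filter.tendsto_atTop_add_const_right _ _ Filter.tendsto_id
  have hGbot : Filter.Tendsto G Filter.atBot Filter.atBot := by
    apply Filter.tendsto_atBot_mono' Filter.atBot (f₁ := fun s => s - m)
    · filter_upwards [Filter.eventually_le_atBot m] with s hs
      rw [hGle s hs]
    · exact Filter.tendsto_atBot_add_const_right _ _ Filter.tendsto_id
  have hGsurj : Function.Surjective G := hGcont.surjective hGtop hGbot
  set e : ℝ ≃o ℝ := StrictMono.orderIsoOfSurjective G hGmono hGsurj with hedef
  have hecoe : ∀ x, e x = G x := fun x => rfl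
  have hesymm : Continuous ⇑e.symm := OrderIso.continuous e.symm
  set S : ℝ → ℝ := fun t => e.symm (t ^ 2 + q ^ 2) with hSdef
  have hGS : ∀ t, G (S t) = t ^ 2 + q ^ 2 := by
    intro t
    have := e.apply_symm_apply (t ^ 2 + q ^ 2)
    rw [hecoe] at this
    exact this
  have hSge : ∀ t, m ≤ S t := by
    intro t
    have h1 : G m ≤ G (S t) := by
      rw [hGS, hGm]; positivity
    exact hGmono.le_iff_le.1 h1
  have hgS : ∀ t, g (S t) = t ^ 2 + q ^ 2 := fun t => by rw [← hGge _ (hSge t), hGS]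
  have hS0 : ∀ t, 0 < S t ∧ β < S t := by
    intro t
    refine hkey (S t) (le_trans hm0 (hSge t)) (le_trans hmβ (hSge t))
      (le_trans hmγ (hSge t)) ?_
    have := hgS t
    simp only [hgdef] at this
    rw [this]
    nlinarith [sq_nonneg t]
  have hSγ : ∀ t, γ ≤ S t := fun t => le_trans hmγ (hSge t)
  have hScont : Continuous S := hesymm.comp ((continuous_id.pow 2).add continuous_const)
  -- the forward map
  set c : ℝ → ℂ := fun t => (t : ℂ) + (q : ℂ) * I with hcdef
  have hcre : ∀ t, (c t).re = t := by intro t; simp [hcdef]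
  have hcim : ∀ t, (c t).im = q := by intro t; simp [hcdef]
  set w1 : Metric.sphere (0:ℂ) 1 × Metric.sphere (0:ℂ) 1 × ℝ → ℂ :=
    fun x => (Real.sqrt (S x.2.2) : ℂ) * (x.1 : ℂ) with hw1def
  set w2 : Metric.sphere (0:ℂ) 1 × Metric.sphere (0:ℂ) 1 × ℝ → ℂ :=
    fun x => (Real.sqrt (S x.2.2 - β) : ℂ) * (x.2.1 : ℂ) with hw2def
  have habs1 : ∀ x, ‖w1 x‖ ^ 2 = S x.2.2 := by
    intro x
    rw [hw1def]
    rw [norm_mul, abs_sphere, mul_one, Complex.norm_real,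
      Real.norm_of_nonneg (Real.sqrt_nonneg _), Real.sq_sqrt (hS0 x.2.2).1.le]
  have habs2 : ∀ x, ‖w2 x‖ ^ 2 = S x.2.2 - β := by
    intro x
    have hβ : 0 ≤ S x.2.2 - β := by linarith [(hS0 x.2.2).2]
    rw [hw2def]
    rw [norm_mul, abs_sphere, mul_one, Complex.norm_real,
      Real.norm_of_nonneg (Real.sqrt_nonneg _), Real.sq_sqrt hβ]
  have hne1 : ∀ x, w1 x ≠ 0 := by
    intro x
    rw [hw1def]
    exact mul_ne_zero (by
      simp only [ne_eq, Complex.ofReal_eq_zero]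
      exact (Real.sqrt_pos.2 (hS0 x.2.2).1).ne') (sphere_ne_zero _)
  have hne2 : ∀ x, w2 x ≠ 0 := by
    intro x
    rw [hw2def]
    have hβ : 0 < S x.2.2 - β := by linarith [(hS0 x.2.2).2]
    exact mul_ne_zero (by
      simp only [ne_eq, Complex.ofReal_eq_zero]
      exact (Real.sqrt_pos.2 hβ).ne')
      (sphere_ne_zero _)
  have hne12 : ∀ x, w1 x * w2 x ≠ 0 := fun x => mul_ne_zero (hne1 x) (hne2 x)
  set Phi : Metric.sphere (0:ℂ) 1 × Metric.sphere (0:ℂ) 1 × ℝ → ℂ × ℂ × ℂ :=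
    fun x => (w1 x, w2 x, c x.2.2 / (w1 x * w2 x)) with hPhidef
  have hprodPhi : ∀ x, (Phi x).1 * (Phi x).2.1 * (Phi x).2.2 = c x.2.2 := by
    intro x
    show w1 x * w2 x * (c x.2.2 / (w1 x * w2 x)) = c x.2.2
    rw [mul_div_cancel₀ _ (hne12 x)]
  have habsc : ∀ t, ‖c t‖ ^ 2 = t ^ 2 + q ^ 2 := by
    intro t
    rw [Complex.sq_norm, Complex.normSq_apply, hcre, hcim]
    ring
  have habs3 : ∀ x, ‖(Phi x).2.2‖ ^ 2 = S x.2.2 - γ := by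
    intro x
    have hmulabs : ‖w1 x‖ ^ 2 * ‖w2 x‖ ^ 2 *
        ‖(Phi x).2.2‖ ^ 2 = x.2.2 ^ 2 + q ^ 2 := by
      rw [← mul_pow, ← mul_pow, ← norm_mul, ← norm_mul, hprodPhi, habsc]
    rw [habs1, habs2] at hmulabs
    have hg := hgS x.2.2
    simp only [hgdef] at hg
    have hpos : (0:ℝ) < S x.2.2 * (S x.2.2 - β) :=
      mul_pos (hS0 x.2.2).1 (by linarith [(hS0 x.2.2).2])
    apply mul_left_cancel₀ hpos.ne'
    calc S x.2.2 * (S x.2.2 - β) * ‖(Phi x).2.2‖ ^ 2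
        = x.2.2 ^ 2 + q ^ 2 := by linarith [hmulabs]
      _ = S x.2.2 * (S x.2.2 - β) * (S x.2.2 - γ) := by linarith [hg]
  have hPhimem : ∀ x, Phi x ∈ HLSet β γ q := by
    intro x
    refine ⟨?_, ?_, ?_⟩
    · show ‖w1 x‖ ^ 2 - ‖w2 x‖ ^ 2 = β
      rw [habs1, habs2]; ring
    · show ‖w1 x‖ ^ 2 - ‖(Phi x).2.2‖ ^ 2 = γ
      rw [habs1, habs3]; ring
    · show ((Phi x).1 * (Phi x).2.1 * (Phi x).2.2).im = q
      rw [hprodPhi, hcim]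
  -- facts about members of HLSet
  have hmemfacts : ∀ w : ℂ × ℂ × ℂ, w ∈ HLSet β γ q →
      0 < ‖w.1‖ ∧ 0 < ‖w.2.1‖ ∧
      S ((w.1 * w.2.1 * w.2.2).re) = ‖w.1‖ ^ 2 := by
    intro w hw
    obtain ⟨hw1, hw2, hw3⟩ := hw
    set s : ℝ := ‖w.1‖ ^ 2 with hsdef
    have hs0 : 0 ≤ s := by positivity
    have hsβ : β ≤ s := by nlinarith [sq_nonneg (‖w.2.1‖)]
    have hsγ : γ ≤ s := by nlinarith [sq_nonneg (‖w.2.2‖)]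
    have hgs : s * (s - β) * (s - γ) = (w.1 * w.2.1 * w.2.2).re ^ 2 + q ^ 2 := by
      have e1 : s - β = ‖w.2.1‖ ^ 2 := by linarith
      have e2 : s - γ = ‖w.2.2‖ ^ 2 := by linarith
      rw [e1, e2, hsdef, ← mul_pow, ← mul_pow, ← norm_mul, ← norm_mul,
        Complex.sq_norm, Complex.normSq_apply, hw3]
      ring
    have hq2 : q ^ 2 ≤ s * (s - β) * (s - γ) := by
      rw [hgs]; nlinarith [sq_nonneg ((w.1 * w.2.1 * w.2.2).re)]
    obtain ⟨hspos, hsβ'⟩ := hkey s hs0 hsβ hsγ hq2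
    have ha1 : 0 < ‖w.1‖ := by
      rcases (norm_nonneg w.1).lt_or_eq with h | h
      · exact h
      · exfalso; rw [hsdef, ← h] at hspos; simp at hspos
    have ha2 : 0 < ‖w.2.1‖ := by
      have h2 : 0 < ‖w.2.1‖ ^ 2 := by nlinarith
      nlinarith [norm_nonneg w.2.1]
    refine ⟨ha1, ha2, ?_⟩
    -- S (re of product) = s
    have hms : m ≤ s := by
      rw [hm]; exact max_le (max_le hs0 hsβ) hsγ
    have hGs : G s = (w.1 * w.2.1 * w.2.2).re ^ 2 + q ^ 2 := by
      rw [hGge s hms]; exact hgs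
    apply hGmono.injective
    rw [hGS, hGs]
  -- unit vector construction
  have hsph : ∀ z : ℂ, z ≠ 0 → (z / (‖z‖ : ℂ)) ∈ Metric.sphere (0:ℂ) 1 := by
    intro z hz
    rw [mem_sphere_zero_iff_norm, norm_div, Complex.norm_real,
      Real.norm_of_nonneg (norm_nonneg z),
      div_self (norm_ne_zero_iff.mpr hz)]
  have hne1' : ∀ w : HLSet β γ q, (w : ℂ × ℂ × ℂ).1 ≠ 0 := by
    intro w
    have := (hmemfacts w.1 w.2).1
    intro h; rw [h] at this; simp at this
  have hne2' : ∀ w : HLSet β γ q, (w : ℂ × ℂ × ℂ).2.1 ≠ 0 := by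
    intro w
    have := (hmemfacts w.1 w.2).2.1
    intro h; rw [h] at this; simp at this
  set Psi : HLSet β γ q → Metric.sphere (0:ℂ) 1 × Metric.sphere (0:ℂ) 1 × ℝ :=
    fun w => (⟨(w : ℂ × ℂ × ℂ).1 / (‖(w : ℂ × ℂ × ℂ).1‖ : ℂ), hsph _ (hne1' w)⟩,
      ⟨(w : ℂ × ℂ × ℂ).2.1 / (‖(w : ℂ × ℂ × ℂ).2.1‖ : ℂ), hsph _ (hne2' w)⟩,
      ((w : ℂ × ℂ × ℂ).1 * (w : ℂ × ℂ × ℂ).2.1 * (w : ℂ × ℂ × ℂ).2.2).re) with hPsidef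
  have habs1' : ∀ x, ‖w1 x‖ = Real.sqrt (S x.2.2) := by
    intro x
    rw [hw1def, norm_mul, abs_sphere, mul_one, Complex.norm_real,
      Real.norm_of_nonneg (Real.sqrt_nonneg _)]
  have habs2' : ∀ x, ‖w2 x‖ = Real.sqrt (S x.2.2 - β) := by
    intro x
    rw [hw2def, norm_mul, abs_sphere, mul_one, Complex.norm_real,
      Real.norm_of_nonneg (Real.sqrt_nonneg _)]
  -- left inverse
  have hleft : ∀ x, Psi ⟨Phi x, hPhimem x⟩ = x := by
    intro x
    obtain ⟨u, v, t⟩ := x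
    have hs := hS0 t
    refine Prod.ext ?_ (Prod.ext ?_ ?_)
    · apply Subtype.ext
      show (Phi (u,v,t)).1 / (‖(Phi (u,v,t)).1‖ : ℂ) = (u : ℂ)
      show w1 (u,v,t) / (‖w1 (u,v,t)‖ : ℂ) = (u : ℂ)
      rw [habs1', hw1def]
      have hne : ((Real.sqrt (S t) : ℝ) : ℂ) ≠ 0 := by
        simp only [ne_eq, Complex.ofReal_eq_zero]
        exact (Real.sqrt_pos.2 hs.1).ne'
      show ((Real.sqrt (S t) : ℝ) : ℂ) * (u : ℂ) / ((Real.sqrt (S t) : ℝ) : ℂ) = (u : ℂ)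
      rw [mul_comm, mul_div_assoc, div_self hne, mul_one]
    · apply Subtype.ext
      show w2 (u,v,t) / (‖w2 (u,v,t)‖ : ℂ) = (v : ℂ)
      rw [habs2', hw2def]
      have hβ : 0 < S t - β := by linarith [hs.2]
      have hne : ((Real.sqrt (S t - β) : ℝ) : ℂ) ≠ 0 := by
        simp only [ne_eq, Complex.ofReal_eq_zero]
        exact (Real.sqrt_pos.2 hβ).ne'
      show ((Real.sqrt (S t - β) : ℝ) : ℂ) * (v : ℂ) / ((Real.sqrt (S t - β) : ℝ) : ℂ) = (v : ℂ)
      rw [mul_comm, mul_div_assoc, div_self hne, mul_one]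
    · show ((Phi (u,v,t)).1 * (Phi (u,v,t)).2.1 * (Phi (u,v,t)).2.2).re = t
      rw [hprodPhi]; exact hcre t
  -- right inverse
  have hright : ∀ w : HLSet β γ q, (⟨Phi (Psi w), hPhimem (Psi w)⟩ : HLSet β γ q) = w := by
    intro w
    obtain ⟨⟨a, b, d⟩, hw⟩ := w
    apply Subtype.ext
    obtain ⟨ha1, ha2, hSs⟩ := hmemfacts (a, b, d) hw
    obtain ⟨hw1', hw2', hw3'⟩ := hw
    set t : ℝ := (a * b * d).re with htdef
    have hSt : S t = ‖a‖ ^ 2 := hSs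
    have hrt1 : Real.sqrt (S t) = ‖a‖ := by
      rw [hSt, Real.sqrt_sq (norm_nonneg a)]
    have hrt2 : Real.sqrt (S t - β) = ‖b‖ := by
      have : S t - β = ‖b‖ ^ 2 := by
        rw [hSt]; simp only at hw1'; linarith [hw1']
      rw [this, Real.sqrt_sq (norm_nonneg b)]
    have hane : (a : ℂ) ≠ 0 := by intro h; rw [h] at ha1; simp at ha1
    have hbne : (b : ℂ) ≠ 0 := by intro h; rw [h] at ha2; simp at ha2
    have e1 : w1 (Psi ⟨(a,b,d), ⟨hw1', hw2', hw3'⟩⟩) = a := by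
      rw [hw1def]
      show (Real.sqrt (S t) : ℂ) * (a / (‖a‖ : ℂ)) = a
      rw [hrt1, mul_comm, div_mul_cancel₀ _ (by
        simp only [ne_eq, Complex.ofReal_eq_zero]; exact ha1.ne' : ((‖a‖ : ℝ) : ℂ) ≠ 0)]
    have e2 : w2 (Psi ⟨(a,b,d), ⟨hw1', hw2', hw3'⟩⟩) = b := by
      rw [hw2def]
      show (Real.sqrt (S t - β) : ℂ) * (b / (‖b‖ : ℂ)) = b
      rw [hrt2, mul_comm, div_mul_cancel₀ _ (by
        simp only [ne_eq, Complex.ofReal_eq_zero]; exact ha2.ne' : ((‖b‖ : ℝ) : ℂ) ≠ 0)]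
    have hprodw : a * b * d = c t := by
      apply Complex.ext
      · rw [hcre]
      · rw [hcim]; exact hw3'
    refine Prod.ext e1 (Prod.ext e2 ?_)
    show c t / (w1 _ * w2 _) = d
    rw [e1, e2, ← hprodw]
    rw [mul_comm (a*b) d, mul_div_assoc, div_self (mul_ne_zero hane hbne), mul_one]
  -- continuity of Phi
  have hw1cont : Continuous w1 := by
    rw [hw1def]
    exact (Complex.continuous_ofReal.comp
      (Real.continuous_sqrt.comp (hScont.comp (continuous_snd.comp continuous_snd)))).mul
      (continuous_subtype_val.comp continuous_fst)
  have hw2cont : Continuous w2 := by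
    rw [hw2def]
    exact (Complex.continuous_ofReal.comp
      (Real.continuous_sqrt.comp ((hScont.comp
        (continuous_snd.comp continuous_snd)).sub continuous_const))).mul
      (continuous_subtype_val.comp (continuous_fst.comp continuous_snd))
  have hccont : Continuous fun x : Metric.sphere (0:ℂ) 1 × Metric.sphere (0:ℂ) 1 × ℝ =>
      c x.2.2 := by
    rw [hcdef]
    exact (Complex.continuous_ofReal.comp (continuous_snd.comp continuous_snd)).add
      continuous_const
  have hPhicont : Continuous Phi := by
    rw [hPhidef]
    exact hw1cont.prodMk (hw2cont.prodMk (hccont.div₀ (hw1cont.mul hw2cont) hne12))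
  -- continuity of Psi
  have hPsicont : Continuous Psi := by
    rw [hPsidef]
    have hc1 : Continuous fun w : HLSet β γ q => (w : ℂ × ℂ × ℂ).1 :=
      continuous_fst.comp continuous_subtype_val
    have hc2 : Continuous fun w : HLSet β γ q => (w : ℂ × ℂ × ℂ).2.1 :=
      (continuous_fst.comp continuous_snd).comp continuous_subtype_val
    have hc3 : Continuous fun w : HLSet β γ q => (w : ℂ × ℂ × ℂ).2.2 :=
      (continuous_snd.comp continuous_snd).comp continuous_subtype_val
    refine Continuous.prodMk ?_ (Continuous.prodMk ?_ ?_)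
    · apply Continuous.subtype_mk
      exact hc1.div₀ (Complex.continuous_ofReal.comp (continuous_norm.comp hc1))
        (fun w => by
          simp only [ne_eq, Complex.ofReal_eq_zero]
          exact (norm_ne_zero_iff.mpr (hne1' w)))
    · apply Continuous.subtype_mk
      exact hc2.div₀ (Complex.continuous_ofReal.comp (continuous_norm.comp hc2))
        (fun w => by
          simp only [ne_eq, Complex.ofReal_eq_zero]
          exact (norm_ne_zero_iff.mpr (hne2' w)))
    · exact Complex.continuous_re.comp ((hc1.mul hc2).mul hc3)
  set F : Metric.sphere (0:ℂ) 1 × Metric.sphere (0:ℂ) 1 × ℝ → HLSet β γ q :=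
    fun x => ⟨Phi x, hPhimem x⟩ with hFdef
  exact ⟨(Homeomorph.mk
    { toFun := F
      invFun := Psi
      left_inv := hleft
      right_inv := hright }
    (hPhicont.subtype_mk hPhimem) hPsicont).symm⟩

lemma mem_fiber (p : Fin 3 → ℝ) (z : Fin 3 → ℂ) :
    z ∈ HarveyLawson ⁻¹' {p} ↔
      ((z 0 * z 1 * z 2).im = p 0 ∧
        ‖z 0‖ ^ 2 - ‖z 1‖ ^ 2 = p 1 ∧
        ‖z 0‖ ^ 2 - ‖z 2‖ ^ 2 = p 2) := by
  simp only [Set.mem_preimage, Set.mem_singleton_iff, HarveyLawson]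
  constructor
  · intro h
    refine ⟨?_, ?_, ?_⟩ <;> rw [← h] <;> simp
  · rintro ⟨h0, h1, h2⟩
    funext i
    fin_cases i <;> simp [h0, h1, h2]

-- identity arrangement
lemma fiber_to_hlset_id (p : Fin 3 → ℝ) :
    Nonempty ((HarveyLawson ⁻¹' {p}) ≃ₜ HLSet (p 1) (p 2) (p 0)) := by
  have hmem1 : ∀ z : HarveyLawson ⁻¹' {p},
      ((z.1 0, z.1 1, z.1 2) : ℂ × ℂ × ℂ) ∈ HLSet (p 1) (p 2) (p 0) := by
    intro z
    obtain ⟨h0, h1, h2⟩ := (mem_fiber p z.1).1 z.2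
    exact ⟨h1, h2, h0⟩
  have hmem2 : ∀ w : HLSet (p 1) (p 2) (p 0),
      (![w.1.1, w.1.2.1, w.1.2.2] : Fin 3 → ℂ) ∈ HarveyLawson ⁻¹' {p} := by
    intro w
    obtain ⟨h1, h2, h0⟩ := w.2
    rw [mem_fiber]
    refine ⟨?_, ?_, ?_⟩ <;> simp [Matrix.cons_val_zero, Matrix.cons_val_one] <;>
      first
        | exact h0
        | exact h1
        | exact h2
  refine ⟨Homeomorph.mk
    { toFun := fun z => ⟨(z.1 0, z.1 1, z.1 2), hmem1 z⟩
      invFun := fun w => ⟨![w.1.1, w.1.2.1, w.1.2.2], hmem2 w⟩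
      left_inv := ?_
      right_inv := ?_ } ?_ ?_⟩
  · intro z
    apply Subtype.ext
    funext i
    fin_cases i <;> simp
  · intro w
    apply Subtype.ext
    refine Prod.ext ?_ (Prod.ext ?_ ?_) <;> simp
  · apply Continuous.subtype_mk
    exact ((continuous_apply 0).comp continuous_subtype_val).prodMk
      (((continuous_apply 1).comp continuous_subtype_val).prodMk
        ((continuous_apply 2).comp continuous_subtype_val))
  · apply Continuous.subtype_mk
    apply continuous_pi
    intro i
    fin_cases i
    · simpa [Function.comp_def] using continuous_fst.comp continuous_subtype_val
    · simpa [Function.comp_def] using (continuous_fst.comp continuous_snd).comp continuous_subtype_val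
    · simpa [Function.comp_def] using (continuous_snd.comp continuous_snd).comp continuous_subtype_val

-- swap arrangement (z0, z2, z1)
lemma fiber_to_hlset_swap (p : Fin 3 → ℝ) :
    Nonempty ((HarveyLawson ⁻¹' {p}) ≃ₜ HLSet (p 2) (p 1) (p 0)) := by
  have hmem1 : ∀ z : HarveyLawson ⁻¹' {p},
      ((z.1 0, z.1 2, z.1 1) : ℂ × ℂ × ℂ) ∈ HLSet (p 2) (p 1) (p 0) := by
    intro z
    obtain ⟨h0, h1, h2⟩ := (mem_fiber p z.1).1 z.2
    refine ⟨h2, h1, ?_⟩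
    rw [show z.1 0 * z.1 2 * z.1 1 = z.1 0 * z.1 1 * z.1 2 by ring]
    exact h0
  have hmem2 : ∀ w : HLSet (p 2) (p 1) (p 0),
      (![w.1.1, w.1.2.2, w.1.2.1] : Fin 3 → ℂ) ∈ HarveyLawson ⁻¹' {p} := by
    intro w
    obtain ⟨h1, h2, h0⟩ := w.2
    rw [mem_fiber]
    refine ⟨?_, ?_, ?_⟩ <;>
      simp only [Matrix.cons_val_zero, Matrix.cons_val_one, Matrix.head_cons,
        Matrix.cons_val_two, Matrix.tail_cons]
    · rw [show w.1.1 * w.1.2.2 * w.1.2.1 = w.1.1 * w.1.2.1 * w.1.2.2 by ring]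
      exact h0
    · exact h2
    · exact h1
  refine ⟨Homeomorph.mk
    { toFun := fun z => ⟨(z.1 0, z.1 2, z.1 1), hmem1 z⟩
      invFun := fun w => ⟨![w.1.1, w.1.2.2, w.1.2.1], hmem2 w⟩
      left_inv := ?_
      right_inv := ?_ } ?_ ?_⟩
  · intro z
    apply Subtype.ext
    funext i
    fin_cases i <;> simp
  · intro w
    apply Subtype.ext
    refine Prod.ext ?_ (Prod.ext ?_ ?_) <;> simp
  · apply Continuous.subtype_mk
    exact ((continuous_apply 0).comp continuous_subtype_val).prodMk
      (((continuous_apply 2).comp continuous_subtype_val).prodMk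
        ((continuous_apply 1).comp continuous_subtype_val))
  · apply Continuous.subtype_mk
    apply continuous_pi
    intro i
    fin_cases i
    · simpa [Function.comp_def] using continuous_fst.comp continuous_subtype_val
    · simpa [Function.comp_def] using (continuous_snd.comp continuous_snd).comp continuous_subtype_val
    · simpa [Function.comp_def] using (continuous_fst.comp continuous_snd).comp continuous_subtype_val

-- cyclic arrangement (z1, z2, z0)
lemma fiber_to_hlset_cyc (p : Fin 3 → ℝ) :
    Nonempty ((HarveyLawson ⁻¹' {p}) ≃ₜ HLSet (p 2 - p 1) (-(p 1)) (p 0)) := by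
  have hmem1 : ∀ z : HarveyLawson ⁻¹' {p},
      ((z.1 1, z.1 2, z.1 0) : ℂ × ℂ × ℂ) ∈ HLSet (p 2 - p 1) (-(p 1)) (p 0) := by
    intro z
    obtain ⟨h0, h1, h2⟩ := (mem_fiber p z.1).1 z.2
    refine ⟨by linarith, by linarith, ?_⟩
    rw [show z.1 1 * z.1 2 * z.1 0 = z.1 0 * z.1 1 * z.1 2 by ring]
    exact h0
  have hmem2 : ∀ w : HLSet (p 2 - p 1) (-(p 1)) (p 0),
      (![w.1.2.2, w.1.1, w.1.2.1] : Fin 3 → ℂ) ∈ HarveyLawson ⁻¹' {p} := by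
    intro w
    obtain ⟨h1, h2, h0⟩ := w.2
    rw [mem_fiber]
    refine ⟨?_, ?_, ?_⟩ <;>
      simp only [Matrix.cons_val_zero, Matrix.cons_val_one, Matrix.head_cons,
        Matrix.cons_val_two, Matrix.tail_cons]
    · rw [show w.1.2.2 * w.1.1 * w.1.2.1 = w.1.1 * w.1.2.1 * w.1.2.2 by ring]
      exact h0
    · linarith
    · linarith
  refine ⟨Homeomorph.mk
    { toFun := fun z => ⟨(z.1 1, z.1 2, z.1 0), hmem1 z⟩
      invFun := fun w => ⟨![w.1.2.2, w.1.1, w.1.2.1], hmem2 w⟩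
      left_inv := ?_
      right_inv := ?_ } ?_ ?_⟩
  · intro z
    apply Subtype.ext
    funext i
    fin_cases i <;> simp
  · intro w
    apply Subtype.ext
    refine Prod.ext ?_ (Prod.ext ?_ ?_) <;> simp
  · apply Continuous.subtype_mk
    exact ((continuous_apply 1).comp continuous_subtype_val).prodMk
      (((continuous_apply 2).comp continuous_subtype_val).prodMk
        ((continuous_apply 0).comp continuous_subtype_val))
  · apply Continuous.subtype_mk
    apply continuous_pi
    intro i
    fin_cases i
    · simpa [Function.comp_def] using (continuous_snd.comp continuous_snd).comp continuous_subtype_val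
    · simpa [Function.comp_def] using continuous_fst.comp continuous_subtype_val
    · simpa [Function.comp_def] using (continuous_fst.comp continuous_snd).comp continuous_subtype_val


/-- Every fiber of the Harvey–Lawson map over a point not on the discriminant locus is
homeomorphic to `S¹ × S¹ × ℝ`. -/
theorem harveyLawson_nonsingular_fiber_homeo
    (p : Fin 3 → ℝ) (hp : p ∉ HLDiscriminant) :
    Nonempty ((HarveyLawson ⁻¹' {p}) ≃ₜ
      (Metric.sphere (0 : ℂ) 1 × Metric.sphere (0 : ℂ) 1 × ℝ)) := by
  simp only [HLDiscriminant, Set.mem_union, Set.mem_setOf_eq, not_or] at hp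
  obtain ⟨⟨hr1, hr2⟩, hr3⟩ := hp
  push_neg at hr1 hr2 hr3
  by_cases hq : p 0 = 0
  · -- p 0 = 0 : three subcases
    have hcase : (0 < p 2 ∧ p 1 < p 2) ∨ (0 < p 1 ∧ p 2 < p 1) ∨ (p 1 < 0 ∧ p 2 < 0) := by
      rcases lt_trichotomy (p 1) (p 2) with h | h | h
      · rcases lt_trichotomy (p 2) 0 with h2 | h2 | h2
        · exact Or.inr (Or.inr ⟨by linarith, h2⟩)
        · exfalso
          apply hr2 (p 1) (by linarith)
          funext i
          fin_cases i <;> simp [hq, h2]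
        · exact Or.inl ⟨h2, h⟩
      · rcases lt_trichotomy (p 1) 0 with h2 | h2 | h2
        · exact Or.inr (Or.inr ⟨h2, by linarith⟩)
        · exfalso
          apply hr1 (p 1) (by linarith)
          funext i
          fin_cases i <;> simp [hq, ← h]
        · exfalso
          apply hr1 (p 1) (by linarith)
          funext i
          fin_cases i <;> simp [hq, ← h]
      · rcases lt_trichotomy (p 1) 0 with h2 | h2 | h2
        · exact Or.inr (Or.inr ⟨h2, by linarith⟩)
        · exfalso
          apply hr3 (p 2) (by linarith)
          funext i
          fin_cases i <;> simp [hq, ← h2]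
        · exact Or.inr (Or.inl ⟨h2, h⟩)
    rcases hcase with ⟨ha, hb⟩ | ⟨ha, hb⟩ | ⟨ha, hb⟩
    · obtain ⟨e1⟩ := fiber_to_hlset_id p
      obtain ⟨e2⟩ := hlset_homeo (p 1) (p 2) (p 0)
        (fun s h0 h1 h2 _ => ⟨by linarith, by linarith⟩)
      exact ⟨e1.trans e2⟩
    · obtain ⟨e1⟩ := fiber_to_hlset_swap p
      obtain ⟨e2⟩ := hlset_homeo (p 2) (p 1) (p 0)
        (fun s h0 h1 h2 _ => ⟨by linarith, by linarith⟩)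
      exact ⟨e1.trans e2⟩
    · obtain ⟨e1⟩ := fiber_to_hlset_cyc p
      obtain ⟨e2⟩ := hlset_homeo (p 2 - p 1) (-(p 1)) (p 0)
        (fun s h0 h1 h2 _ => ⟨by linarith, by linarith⟩)
      exact ⟨e1.trans e2⟩
  · -- p 0 ≠ 0
    obtain ⟨e1⟩ := fiber_to_hlset_id p
    have hkey : ∀ s : ℝ, 0 ≤ s → p 1 ≤ s → p 2 ≤ s →
        p 0 ^ 2 ≤ s * (s - p 1) * (s - p 2) → 0 < s ∧ p 1 < s := by
      intro s h0 h1 h2 hprod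
      have hq2 : 0 < p 0 ^ 2 := by positivity
      constructor
      · rcases h0.lt_or_eq with h | h
        · exact h
        · exfalso
          have : s * (s - p 1) * (s - p 2) = 0 := by rw [← h]; ring
          linarith
      · rcases h1.lt_or_eq with h | h
        · exact h
        · exfalso
          have : s * (s - p 1) * (s - p 2) = 0 := by rw [← h]; ring
          linarith
    obtain ⟨e2⟩ := hlset_homeo (p 1) (p 2) (p 0) hkey
    exact ⟨e1.trans e2⟩
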